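/- Let f be a real-valued C² function defined on an open subset of ℝⁿ, β ∈ ℝ, and c(x,y) = √((β − f(x))² + |x − y|²) at a point (x,y) with f(x) ≠ β. Then the determinant of the n×n matrix of mixed second partial derivatives (∂²c/∂xᵢ∂y_j)(x,y) equals (−1/c(x,y))ⁿ · ((β − f(x))/c(x,y)²) · (β − f(x) + (x − y)·∇f(x)), where · denotes the Euclidean inner product. -/

import Mathlib

open scoped RealInnerProductSpace


lemma hasFDerivAt_sqrt_y {n : ℕ} (a : ℝ) (p q : EuclideanSpace ℝ (Fin n))
    (h : 0 < a + ‖p - q‖ ^ 2) :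
    HasFDerivAt (fun y' => Real.sqrt (a + ‖p - y'‖ ^ 2))
      (-(Real.sqrt (a + ‖p - q‖ ^ 2))⁻¹ • (innerSL ℝ (p - q))) q := by
  have hsub : HasFDerivAt (fun y' : EuclideanSpace ℝ (Fin n) => p - y')
      (0 - ContinuousLinearMap.id ℝ _) q :=
    (hasFDerivAt_const p q).sub (hasFDerivAt_id q)
  have hinner := hsub.inner ℝ hsub
  have hg : HasFDerivAt (fun y' : EuclideanSpace ℝ (Fin n) => a + ‖p - y'‖ ^ 2)
      ((-(2:ℝ)) • innerSL ℝ (p - q)) q := by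
    have := (hasFDerivAt_const a q).add hinner
    simp only [real_inner_self_eq_norm_sq] at this
    refine this.congr_fderiv (Eq.symm ?_)
    ext v
    simp [fderivInnerCLM_apply, real_inner_comm (p - q) v, PiLp.inner_apply, sub_mul,
      Finset.sum_sub_distrib]
    simp only [mul_sub, Finset.sum_sub_distrib]
    ring
  have hs : Real.sqrt (a + ‖p - q‖ ^ 2) ≠ 0 := by positivity
  have := hg.sqrt h.ne'
  refine this.congr_fderiv (Eq.symm ?_)
  ext v
  simp only [ContinuousLinearMap.smul_apply, ContinuousLinearMap.neg_apply, smul_eq_mul]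
  field_simp

lemma hasFDerivAt_c {n : ℕ} (f : EuclideanSpace ℝ (Fin n) → ℝ) (β : ℝ)
    (x y : EuclideanSpace ℝ (Fin n)) (df : EuclideanSpace ℝ (Fin n) →L[ℝ] ℝ)
    (hdf : HasFDerivAt f df x) (h : 0 < (β - f x) ^ 2 + ‖x - y‖ ^ 2) :
    HasFDerivAt (fun x' => Real.sqrt ((β - f x') ^ 2 + ‖x' - y‖ ^ 2))
      ((Real.sqrt ((β - f x) ^ 2 + ‖x - y‖ ^ 2))⁻¹ •
        (innerSL ℝ (x - y) - (β - f x) • df)) x := by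
  have hb : HasFDerivAt (fun x' => β - f x') (0 - df) x := (hasFDerivAt_const β x).sub hdf
  have h1 : HasFDerivAt (fun x' => (β - f x') ^ 2)
      ((β - f x) • (0 - df) + (β - f x) • (0 - df)) x := by
    simp only [sq]; exact hb.mul hb
  have hsub : HasFDerivAt (fun x' : EuclideanSpace ℝ (Fin n) => x' - y)
      (ContinuousLinearMap.id ℝ _ - 0) x :=
    (hasFDerivAt_id x).sub (hasFDerivAt_const y x)
  have hinner := hsub.inner ℝ hsub
  have h2 : HasFDerivAt (fun x' : EuclideanSpace ℝ (Fin n) => ‖x' - y‖ ^ 2)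
      ((2:ℝ) • innerSL ℝ (x - y)) x := by
    simp only [real_inner_self_eq_norm_sq] at hinner
    refine hinner.congr_fderiv (Eq.symm ?_)
    ext v
    simp [fderivInnerCLM_apply, real_inner_comm (x - y) v, PiLp.inner_apply, sub_mul,
      Finset.sum_sub_distrib]
    simp only [mul_sub, Finset.sum_sub_distrib]
    ring
  have hs : Real.sqrt ((β - f x) ^ 2 + ‖x - y‖ ^ 2) ≠ 0 := by positivity
  have := (h1.add h2).sqrt h.ne'
  refine this.congr_fderiv (Eq.symm ?_)
  ext v
  simp only [ContinuousLinearMap.smul_apply, ContinuousLinearMap.sub_apply,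
    ContinuousLinearMap.add_apply, ContinuousLinearMap.zero_apply, smul_eq_mul,
    ContinuousLinearMap.smul_apply, Pi.add_apply]
  field_simp
  ring


/-- For the cost `c(x,y) = √((β − f(x))² + |x − y|²)` with `f(x) ≠ β`,
the determinant of the matrix of mixed second partials equals
`(−1/c)ⁿ ((β − f(x))/c²)(β − f(x) + (x − y)·∇f(x))`. -/
theorem det_mixed_partials_constant_g {n : ℕ}
    (f : EuclideanSpace ℝ (Fin n) → ℝ)
    (U : Set (EuclideanSpace ℝ (Fin n))) (hU : IsOpen U)
    (hf : ContDiffOn ℝ 2 f U)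
    (β : ℝ)
    (x y : EuclideanSpace ℝ (Fin n)) (hx : x ∈ U)
    (hfβ : f x ≠ β) :
    Matrix.det (Matrix.of fun i j : Fin n =>
      fderiv ℝ (fun x' => fderiv ℝ
          (fun y' => Real.sqrt ((β - f x') ^ 2 + ‖x' - y'‖ ^ 2)) y
          (EuclideanSpace.single j 1)) x (EuclideanSpace.single i 1))
    = (-(Real.sqrt ((β - f x) ^ 2 + ‖x - y‖ ^ 2))⁻¹) ^ n *
      ((β - f x) / (Real.sqrt ((β - f x) ^ 2 + ‖x - y‖ ^ 2)) ^ 2) *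
      (β - f x + ⟪x - y, gradient f x⟫) := by
  have hb0 : β - f x ≠ 0 := sub_ne_zero.mpr (Ne.symm hfβ)
  have hQ : 0 < (β - f x) ^ 2 + ‖x - y‖ ^ 2 := by positivity
  set c := Real.sqrt ((β - f x) ^ 2 + ‖x - y‖ ^ 2) with hc_def
  have hc0 : 0 < c := Real.sqrt_pos.mpr hQ
  have hc2 : c ^ 2 = (β - f x) ^ 2 + ‖x - y‖ ^ 2 := Real.sq_sqrt hQ.le
  have hfd : HasFDerivAt f (fderiv ℝ f x) x :=
    ((hf.contDiffAt (hU.mem_nhds hx)).differentiableAt (by norm_num)).hasFDerivAt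
  set df := fderiv ℝ f x with hdf_def
  set g := gradient f x with hg_def
  have hdfg : ∀ v, df v = ⟪g, v⟫ := fun v => by
    rw [hg_def, gradient]; exact (InnerProductSpace.toDual_symm_apply).symm
  have hev : ∀ᶠ x' in nhds x, 0 < (β - f x') ^ 2 + ‖x' - y‖ ^ 2 := by
    filter_upwards [hfd.differentiableAt.continuousAt.eventually_ne hfβ] with x' h'
    have : β - f x' ≠ 0 := sub_ne_zero.mpr (Ne.symm h')
    positivity
  set w : Fin n → ℝ := fun i => -(c ^ 2)⁻¹ * ((x i - y i) - (β - f x) * g i) with hw_def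
  set u : Fin n → ℝ := fun j => x j - y j with hu_def
  have hM : ∀ i j : Fin n,
      fderiv ℝ (fun x' => fderiv ℝ
          (fun y' => Real.sqrt ((β - f x') ^ 2 + ‖x' - y'‖ ^ 2)) y
          (EuclideanSpace.single j 1)) x (EuclideanSpace.single i 1)
      = (-c⁻¹) * ((if i = j then 1 else 0) + w i * u j) := by
    intro i j
    have hF : (fun x' => fderiv ℝ
          (fun y' => Real.sqrt ((β - f x') ^ 2 + ‖x' - y'‖ ^ 2)) y
          (EuclideanSpace.single j 1)) =ᶠ[nhds x]
        (fun x' => -(Real.sqrt ((β - f x') ^ 2 + ‖x' - y‖ ^ 2))⁻¹ * (x' j - y j)) := by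
      filter_upwards [hev] with x' h'
      rw [(hasFDerivAt_sqrt_y _ x' y h').fderiv]
      simp [EuclideanSpace.inner_single_right, PiLp.sub_apply]
    rw [hF.fderiv_eq]
    have hcF := hasFDerivAt_c f β x y df hfd hQ
    have hu1 : HasFDerivAt
        (fun x' => -(Real.sqrt ((β - f x') ^ 2 + ‖x' - y‖ ^ 2))⁻¹)
        (-((-(c ^ 2)⁻¹) • (c⁻¹ • (innerSL ℝ (x - y) - (β - f x) • df)))) x :=
      ((hasDerivAt_inv hc0.ne').comp_hasFDerivAt x hcF).neg
    have hproj : HasFDerivAt (fun x' : EuclideanSpace ℝ (Fin n) => x' j)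
        (EuclideanSpace.proj (𝕜 := ℝ) j) x := (EuclideanSpace.proj (𝕜 := ℝ) j).hasFDerivAt
    have hv : HasFDerivAt (fun x' : EuclideanSpace ℝ (Fin n) => x' j - y j)
        (EuclideanSpace.proj (𝕜 := ℝ) j) x := hproj.sub_const _
    have hm : HasFDerivAt
        (fun x' => -(Real.sqrt ((β - f x') ^ 2 + ‖x' - y‖ ^ 2))⁻¹ * (x' j - y j)) _ x := hu1.mul hv
    rw [hm.fderiv]
    simp only [ContinuousLinearMap.add_apply, ContinuousLinearMap.smul_apply,
      ContinuousLinearMap.sub_apply, ContinuousLinearMap.neg_apply,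
      ContinuousLinearMap.zero_apply, smul_eq_mul, hdfg,
      PiLp.proj_apply, EuclideanSpace.single_apply,
      EuclideanSpace.inner_single_right, PiLp.sub_apply,
      innerSL_apply_apply, conj_trivial, one_mul]
    simp only [hw_def, hu_def]
    rcases eq_or_ne i j with h | h
    · subst h; simp; ring
    · simp [h, Ne.symm h]; ring
  have hmat : (Matrix.of fun i j : Fin n =>
      fderiv ℝ (fun x' => fderiv ℝ
          (fun y' => Real.sqrt ((β - f x') ^ 2 + ‖x' - y'‖ ^ 2)) y
          (EuclideanSpace.single j 1)) x (EuclideanSpace.single i 1))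
      = (-c⁻¹) • (1 + Matrix.replicateCol Unit w * Matrix.replicateRow Unit u) := by
    ext i j
    rw [Matrix.of_apply, hM i j]
    simp [Matrix.mul_apply, Matrix.one_apply]
  rw [hmat, Matrix.det_smul, Matrix.det_one_add_replicateCol_mul_replicateRow]
  have hsum : ⟪x - y, g⟫ = ∑ j, (x j - y j) * g j := by
    simp [PiLp.inner_apply, PiLp.sub_apply]
    exact Finset.sum_congr rfl fun _ _ => mul_comm _ _
  have hn2 : ‖x - y‖ ^ 2 = ∑ j, (x j - y j) ^ 2 := by
    rw [EuclideanSpace.norm_sq_eq]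
    simp [Real.norm_eq_abs, sq_abs]
  have h1 : dotProduct u w
      = ∑ j, -(c ^ 2)⁻¹ * ((x j - y j) ^ 2 - (β - f x) * ((x j - y j) * g j)) := by
    simp only [dotProduct, hw_def, hu_def]
    exact Finset.sum_congr rfl fun j _ => by ring
  have h2 : ∑ j, -(c ^ 2)⁻¹ * ((x j - y j) ^ 2 - (β - f x) * ((x j - y j) * g j))
      = -(c ^ 2)⁻¹ * ((∑ j, (x j - y j) ^ 2) - (β - f x) * ∑ j, (x j - y j) * g j) := by
    rw [← Finset.mul_sum, Finset.sum_sub_distrib, ← Finset.mul_sum]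
  have key : 1 + dotProduct u w = (β - f x) / c ^ 2 * (β - f x + ⟪x - y, g⟫) := by
    rw [h1, h2, ← hn2, ← hsum]
    field_simp
    linear_combination hc2
  rw [key, Fintype.card_fin]
  ring
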